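/- Let Δ, d, k be positive integers with (d+1)k ≥ Δ + 1, and let G be an n-vertex graph with maximum degree at most Δ. Suppose that G has no equitable d-degenerate k-colouring but has a minimal near-equitable d-degenerate k-colouring φ. Then for every accessible colour class V of φ, the set B of vertices in non-accessible classes satisfies |B| ≥ b·|V| + 1, where b is the number of non-accessible classes. -/

import Mathlib

open Finset

attribute [local instance] Classical.propDecidable

variable {V : Type*} [Fintype V] [DecidableEq V]

/-- The subgraph of `G` induced on the vertex set `S` is `d`-degenerate: every nonempty
subset of `S` contains a vertex having at most `d` neighbours inside that subset. -/
def DegenOn (G : SimpleGraph V) (d : ℕ) (S : Finset V) : Prop :=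
  ∀ s : Finset V, s ⊆ S → s.Nonempty → ∃ v ∈ s, (s.filter (fun u => G.Adj v u)).card ≤ d

/-- The colour class of colour `i` under the colouring `f`. -/
def cls {k : ℕ} (f : V → Fin k) (i : Fin k) : Finset V :=
  Finset.univ.filter (fun v => f v = i)

/-- `f` is a `d`-degenerate `k`-colouring of `G`: each colour class induces a
`d`-degenerate subgraph. -/
def IsDegenColoring (G : SimpleGraph V) (d : ℕ) {k : ℕ} (f : V → Fin k) : Prop :=
  ∀ i, DegenOn G d (cls f i)

/-- `f` is an equitable colouring: any two colour classes differ in size by at most one. -/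
def IsEquitable {k : ℕ} (f : V → Fin k) : Prop :=
  ∀ i j, (cls f i).card ≤ (cls f j).card + 1

/-- `f` is a near-equitable `k`-colouring of an `n`-vertex graph (conditions (E1),(E2)):
with the colour classes sorted by size, `⌊n/k⌋ − 1 ≤ |C_1| ≤ ⌊n/k⌋ ≤ |C_2| ≤ … ≤
|C_{k−1}| ≤ ⌈n/k⌉ ≤ |C_k| ≤ ⌈n/k⌉ + 1`, and `2 ≤ |C_k| − |C_1| ≤ 3`.  Stated label-free:
all class sizes lie in `[⌊n/k⌋ − 1, ⌈n/k⌉ + 1]`, at most one class is smaller than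
`⌊n/k⌋`, at most one class is larger than `⌈n/k⌉`, some class has size `≤ ⌊n/k⌋`, some
class has size `≥ ⌈n/k⌉`, and the largest class exceeds the smallest by at least `2` and
at most `3`.  (Here `⌈n/k⌉ = (n + k - 1) / k` in natural division.) -/
def NearEquitable (n : ℕ) {k : ℕ} (f : V → Fin k) : Prop :=
  (∀ i, n / k - 1 ≤ (cls f i).card ∧ (cls f i).card ≤ (n + k - 1) / k + 1) ∧
  (Finset.univ.filter (fun i => (cls f i).card < n / k)).card ≤ 1 ∧
  (Finset.univ.filter (fun i => (n + k - 1) / k < (cls f i).card)).card ≤ 1 ∧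
  (∃ i, (cls f i).card ≤ n / k) ∧
  (∃ i, (n + k - 1) / k ≤ (cls f i).card) ∧
  (∃ i j, (cls f i).card + 2 ≤ (cls f j).card) ∧
  (∀ i j, (cls f j).card ≤ (cls f i).card + 3)

/-- The vertex `v` is movable to the colour class of colour `j`: `v` has a different
colour, and adding `v` to that class keeps it `d`-degenerate. -/
def Movable (G : SimpleGraph V) (d : ℕ) {k : ℕ} (f : V → Fin k) (v : V) (j : Fin k) :
    Prop :=
  f v ≠ j ∧ DegenOn G d (insert v (cls f j))

/-- Arc of the auxiliary digraph `D`: there is an arc from colour `i` to colour `j`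
(`i ≠ j`) iff some vertex of class `i` is movable to class `j`. -/
def MvArc (G : SimpleGraph V) (d : ℕ) {k : ℕ} (f : V → Fin k) (i j : Fin k) : Prop :=
  i ≠ j ∧ ∃ v, f v = i ∧ Movable G d f v j

/-- Class `i` is accessible to class `j`: `D` has a (possibly trivial) directed path from
`i` to `j`. -/
def AccTo (G : SimpleGraph V) (d : ℕ) {k : ℕ} (f : V → Fin k) : Fin k → Fin k → Prop :=
  Relation.ReflTransGen (MvArc G d f)

/-- Accessibility within the subdigraph of `D` induced on the set `S` of colours. -/
def AccToWithin (G : SimpleGraph V) (d : ℕ) {k : ℕ} (f : V → Fin k)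
    (S : Finset (Fin k)) : Fin k → Fin k → Prop :=
  Relation.ReflTransGen (fun i j => i ∈ S ∧ j ∈ S ∧ MvArc G d f i j)

/-- Class `i` has minimum size among all colour classes. -/
def IsMinClass {k : ℕ} (f : V → Fin k) (i : Fin k) : Prop :=
  ∀ j, (cls f i).card ≤ (cls f j).card

/-- Class `i` is accessible: it is accessible to some colour class of minimum size. -/
def Accessible (G : SimpleGraph V) (d : ℕ) {k : ℕ} (f : V → Fin k) (i : Fin k) : Prop :=
  ∃ j, IsMinClass f j ∧ AccTo G d f i j

/-- `𝒜`: the set of accessible colours. -/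
noncomputable def Aset (G : SimpleGraph V) (d : ℕ) {k : ℕ} (f : V → Fin k) :
    Finset (Fin k) :=
  Finset.univ.filter (fun i => Accessible G d f i)

/-- `ℬ`: the set of non-accessible colours. -/
noncomputable def Bset (G : SimpleGraph V) (d : ℕ) {k : ℕ} (f : V → Fin k) :
    Finset (Fin k) :=
  Finset.univ.filter (fun i => ¬ Accessible G d f i)

/-- `A`: the union of the accessible colour classes. -/
noncomputable def Averts (G : SimpleGraph V) (d : ℕ) {k : ℕ} (f : V → Fin k) : Finset V :=
  Finset.univ.filter (fun v => Accessible G d f (f v))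

/-- `B`: the union of the non-accessible colour classes. -/
noncomputable def Bverts (G : SimpleGraph V) (d : ℕ) {k : ℕ} (f : V → Fin k) : Finset V :=
  Finset.univ.filter (fun v => ¬ Accessible G d f (f v))

/-- The colours used by the subdigraphs `D_1, …, D_{i-1}` preceding `D_i`. -/
def UsedBefore {k q : ℕ} (𝒟 : Fin q → Finset (Fin k)) (i : Fin q) : Finset (Fin k) :=
  (Finset.univ.filter (fun i' => i' < i)).biUnion 𝒟

/-- `(𝒟, trm)` is the decomposition `D_1, …, D_q` of `𝒜` with terminals
`trm 1, …, trm q`: at each step `i`, `trm i` is the smallest-index minimum-size colour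
class not yet used (here "smallest index" is the smallest colour, the classes being
labelled in non-decreasing order of size), `D_i` consists of the unused accessible classes
accessible to `trm i`, the process exhausts all minimum-size classes, and every accessible
class belongs to some `D_i`. -/
def IsDecomp (G : SimpleGraph V) (d : ℕ) {k : ℕ} (f : V → Fin k) {q : ℕ}
    (𝒟 : Fin q → Finset (Fin k)) (trm : Fin q → Fin k) : Prop :=
  (∀ i : Fin q,
      IsMinClass f (trm i) ∧
      trm i ∉ UsedBefore 𝒟 i ∧
      (∀ j, IsMinClass f j → j ∉ UsedBefore 𝒟 i → trm i ≤ j) ∧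
      (∀ u, u ∈ 𝒟 i ↔
        Accessible G d f u ∧ u ∉ UsedBefore 𝒟 i ∧ AccTo G d f u (trm i))) ∧
  (∀ j, IsMinClass f j → ∃ i, j ∈ 𝒟 i) ∧
  (∀ u, Accessible G d f u → ∃ i, u ∈ 𝒟 i)

/-- `𝒯` for the choice `U` of removed class: the classes of `D_- − U` (here `Dl` is the
vertex set of `D_-` and `Cm` its terminal `C_-`) that are non-accessible to `C_-` in
`D_- − U`. -/
noncomputable def TSet (G : SimpleGraph V) (d : ℕ) {k : ℕ} (f : V → Fin k)
    (Dl : Finset (Fin k)) (Cm U : Fin k) : Finset (Fin k) :=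
  (Dl.erase U).filter (fun W => ¬ AccToWithin G d f (Dl.erase U) W Cm)

/-- `U` is a valid choice of `U_-`: it belongs to `D_-` and minimises the number of
classes of `D_- − U` that are non-accessible to `C_-` there. -/
def IsUminus (G : SimpleGraph V) (d : ℕ) {k : ℕ} (f : V → Fin k)
    (Dl : Finset (Fin k)) (Cm U : Fin k) : Prop :=
  U ∈ Dl ∧ ∀ U' ∈ Dl, (TSet G d f Dl Cm U).card ≤ (TSet G d f Dl Cm U').card

/-- `e` is a degeneracy ordering of the induced subgraph `G[S]` for the parameter `d`. -/
def IsDegOrdOn (G : SimpleGraph V) (d : ℕ) (S : Finset V)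
    (e : Fin S.card ≃ {x // x ∈ S}) : Prop :=
  ∀ i, (Finset.univ.filter (fun j => j < i ∧ G.Adj (e i : V) (e j : V))).card ≤ d

/-- The parameter `p` of a degeneracy ordering of `G[S]`: the largest (1-based) index
whose vertex has exactly `d` earlier neighbours (`0` if none). -/
noncomputable def ordPOn (G : SimpleGraph V) (d : ℕ) (S : Finset V)
    (e : Fin S.card ≃ {x // x ∈ S}) : ℕ :=
  (Finset.univ.filter (fun i =>
    (Finset.univ.filter (fun j => j < i ∧ G.Adj (e i : V) (e j : V))).card = d)).sup
      (fun i => (i : ℕ) + 1)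

/-- `p(G[S])`: the minimum of `ordPOn` over all degeneracy orderings of `G[S]`. -/
noncomputable def pMinOn (G : SimpleGraph V) (d : ℕ) (S : Finset V) : ℕ :=
  sInf {p | ∃ e : Fin S.card ≃ {x // x ∈ S}, IsDegOrdOn G d S e ∧ ordPOn G d S e = p}

/-- `V*` of the ordering `e` of `G[S]`: the set of its first `ordPOn G d S e` vertices. -/
noncomputable def VstarOf (G : SimpleGraph V) (d : ℕ) (S : Finset V)
    (e : Fin S.card ≃ {x // x ∈ S}) : Finset V :=
  (Finset.univ.filter (fun i : Fin S.card => (i : ℕ) < ordPOn G d S e)).image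
    (fun i => (e i : V))

/-- The size of the largest colour class, `|C_k|`. -/
def maxS {k : ℕ} (f : V → Fin k) : ℕ := Finset.univ.sup (fun i => (cls f i).card)

/-- The size of the smallest colour class, `|C_1|`. -/
noncomputable def minS {k : ℕ} (f : V → Fin k) : ℕ := sInf {m | ∃ i, (cls f i).card = m}

/-- `Σ_{V ∈ 𝒯} |V*| = Σ_{V ∈ 𝒯} p(G[V])`. -/
noncomputable def sumT (G : SimpleGraph V) (d : ℕ) {k : ℕ} (f : V → Fin k)
    (𝒯 : Finset (Fin k)) : ℕ :=
  ∑ i ∈ 𝒯, pMinOn G d (cls f i)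

/-- Lexicographic comparison of triples of naturals. -/
def Lex3Le (x y : ℕ × ℕ × ℕ) : Prop :=
  x.1 < y.1 ∨ (x.1 = y.1 ∧ (x.2.1 < y.2.1 ∨ (x.2.1 = y.2.1 ∧ x.2.2 ≤ y.2.2)))

/-- The triple `(|C_k| − |C_1|, b, Σ_{V ∈ 𝒯} |V*|)` associated with a colouring `f` and a
choice `𝒯` of the set of classes `𝒯`. -/
noncomputable def tripleOf (G : SimpleGraph V) (d : ℕ) {k : ℕ} (f : V → Fin k)
    (𝒯 : Finset (Fin k)) : ℕ × ℕ × ℕ :=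
  (maxS f - minS f, (Bset G d f).card, sumT G d f 𝒯)

/-- The near-equitable `d`-degenerate colouring `f` (with its associated set `𝒯f`) is
minimal: its triple `(|C_k| − |C_1|, b, Σ_{V ∈ 𝒯} |V*|)` is lexicographically smallest
among all near-equitable `d`-degenerate `k`-colourings of `G` with their associated
choices of decomposition and `U_-`. -/
def MinimalNE (G : SimpleGraph V) (d : ℕ) {k : ℕ} (f : V → Fin k)
    (𝒯f : Finset (Fin k)) : Prop :=
  ∀ g : V → Fin k, IsDegenColoring G d g → NearEquitable (Fintype.card V) g →
    ∀ (q : ℕ) (hq : 0 < q) (𝒟 : Fin q → Finset (Fin k)) (trm : Fin q → Fin k),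
      IsDecomp G d g 𝒟 trm →
      ∀ U : Fin k,
        IsUminus G d g (𝒟 ⟨q - 1, by omega⟩) (trm ⟨q - 1, by omega⟩) U →
        Lex3Le (tripleOf G d f 𝒯f)
          (tripleOf G d g (TSet G d g (𝒟 ⟨q - 1, by omega⟩) (trm ⟨q - 1, by omega⟩) U))

/-- `G[S]` has an equitable `d`-degenerate `m`-colouring. -/
def HasEqDegenColOn (G : SimpleGraph V) (d : ℕ) (S : Finset V) (m : ℕ) : Prop :=
  ∃ g : V → Fin m,
    (∀ i, DegenOn G d (S.filter (fun v => g v = i))) ∧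
    (∀ i j, (S.filter (fun v => g v = i)).card ≤ (S.filter (fun v => g v = j)).card + 1)

set_option linter.unusedSectionVars false
set_option linter.unusedVariables false

lemma mem_cls {k : ℕ} {f : V → Fin k} {v : V} {i : Fin k} : v ∈ cls f i ↔ f v = i := by
  simp [cls]

lemma degenOn_mono {G : SimpleGraph V} {d : ℕ} {S T : Finset V} (h : T ⊆ S)
    (hS : DegenOn G d S) : DegenOn G d T :=
  fun s hs hne => hS s (hs.trans h) hne

lemma cls_update_ne {k : ℕ} {f : V → Fin k} {v : V} {j Z : Fin k} (h : Z ≠ j) :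
    cls (Function.update f v j) Z = (cls f Z).erase v := by
  ext u
  by_cases hu : u = v
  · subst hu; simp [cls, Function.update, h.symm]
  · simp [cls, Function.update, hu, Finset.mem_erase]

lemma cls_update_eq {k : ℕ} {f : V → Fin k} {v : V} {j : Fin k} :
    cls (Function.update f v j) j = insert v (cls f j) := by
  ext u
  by_cases hu : u = v
  · subst hu; simp [cls, Function.update]
  · simp [cls, Function.update, hu]

/-- dedup of a chain -/
lemma chain_dedup {α : Type*} {r : α → α → Prop} :
    ∀ (n : ℕ) (l : List α) (a : α), l.length ≤ n → List.Chain r a l →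
    ∃ l' : List α, List.Chain r a l' ∧ (a :: l').getLast? = (a :: l).getLast? ∧
      (a :: l').Nodup ∧ l' ⊆ l := by
  intro n
  induction n with
  | zero =>
    intro l a hl _
    have : l = [] := List.length_eq_zero_iff.1 (Nat.le_zero.1 hl)
    subst this
    exact ⟨[], List.Chain.nil, rfl, List.nodup_singleton a, List.Subset.refl _⟩
  | succ n ih =>
    intro l a hl hc
    by_cases ha : a ∈ l
    · obtain ⟨s, t, rfl⟩ := List.append_of_mem ha
      have hct : List.Chain r a t := (List.isChain_cons_split.1 hc).2
      have hlen : t.length ≤ n := by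
        have := List.length_append (as := s) (bs := a :: t)
        simp [List.length_append] at hl ⊢
        omega
      obtain ⟨l', h1, h2, h3, h4⟩ := ih t a hlen hct
      refine ⟨l', h1, ?_, h3, fun x hx => List.mem_append.2 (Or.inr (List.mem_cons_of_mem _ (h4 hx)))⟩
      rw [h2]
      show _ = (a :: (s ++ a :: t)).getLast?
      rw [show a :: (s ++ a :: t) = (a :: s) ++ (a :: t) by simp]
      rw [List.getLast?_append_of_ne_nil _ (List.cons_ne_nil _ _)]
    · match l, hc with
      | [], _ => exact ⟨[], List.Chain.nil, rfl, List.nodup_singleton a, List.Subset.refl _⟩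
      | b :: t, hc' =>
        obtain ⟨hab, hbt⟩ := List.isChain_cons_cons.1 hc'
        have hlen : t.length ≤ n := by simp at hl; omega
        obtain ⟨l', h1, h2, h3, h4⟩ := ih t b hlen hbt
        refine ⟨b :: l', List.Chain.cons hab h1, ?_, ?_, ?_⟩
        · rw [List.getLast?_cons_cons, h2, List.getLast?_cons_cons]
        · refine List.nodup_cons.2 ⟨?_, h3⟩
          intro hmem
          rcases List.mem_cons.1 hmem with h | h
          · exact ha (h ▸ List.mem_cons_self (a := b) (l := t))
          · exact ha (List.mem_cons_of_mem _ (h4 h))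
        · intro x hx
          rcases List.mem_cons.1 hx with h | h
          · exact h ▸ List.mem_cons_self (a := b) (l := t)
          · exact List.mem_cons_of_mem _ (h4 h)

lemma move_along (G : SimpleGraph V) (d : ℕ) {k : ℕ} (f : V → Fin k)
    (hf : IsDegenColoring G d f) :
    ∀ (l : List (Fin k)) (X : Fin k), List.Chain (MvArc G d f) X l → (X :: l).Nodup →
      ∀ C : Fin k, (X :: l).getLast? = some C → X ≠ C →
      ∃ g : V → Fin k, IsDegenColoring G d g ∧
        cls g X ⊆ cls f X ∧ (cls g X).card + 1 = (cls f X).card ∧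
        (cls g C).card = (cls f C).card + 1 ∧
        (∀ Z, Z ≠ X → Z ≠ C → (cls g Z).card = (cls f Z).card) ∧
        (∀ Z, Z ∉ X :: l → cls g Z = cls f Z) := by
  intro l
  induction l with
  | nil =>
    intro X _ _ C hlast hXC
    simp at hlast
    exact absurd hlast hXC
  | cons b t ih =>
    intro X hc hnd C hlast hXC
    obtain ⟨hXb, hbt⟩ := List.isChain_cons_cons.1 hc
    rcases hXb with ⟨hXbne, v, hv, hmv⟩
    have hvX : v ∈ cls f X := mem_cls.2 hv
    by_cases hbC : b = C
    · -- then t = []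
      have ht : t = [] := by
        by_contra htne
        have h1 : (X :: b :: t).getLast? = t.getLast? := by
          rw [List.getLast?_cons_cons]
          cases t with
          | nil => exact absurd rfl htne
          | cons c t' => rw [List.getLast?_cons_cons]
        have hCt : C ∈ t := by
          obtain ⟨hh, hC⟩ := List.mem_getLast?_eq_getLast (show C ∈ t.getLast? from h1 ▸ hlast)
          exact hC ▸ List.getLast_mem hh
        have hbt' : b ∈ t := hbC ▸ hCt
        exact (List.nodup_cons.1 ((List.nodup_cons.1 hnd).2)).1 hbt'
      subst ht
      rw [hbC] at hmv hXbne
      refine ⟨Function.update f v C, ?_, ?_, ?_, ?_, ?_, ?_⟩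
      · intro i
        by_cases hi : i = C
        · subst hi; rw [cls_update_eq]; exact hmv.2
        · rw [cls_update_ne hi]
          exact degenOn_mono (Finset.erase_subset _ _) (hf i)
      · rw [cls_update_ne hXC]; exact Finset.erase_subset _ _
      · rw [cls_update_ne hXC]; exact Finset.card_erase_add_one hvX
      · rw [cls_update_eq]
        rw [Finset.card_insert_of_notMem (fun h => hmv.1 (mem_cls.1 h))]
      · intro Z hZX hZC
        rw [cls_update_ne hZC, Finset.erase_eq_of_notMem]
        intro h
        exact hZX ((mem_cls.1 h).symm.trans hv)
      · intro Z hZ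
        simp only [List.mem_cons, List.mem_singleton, not_or] at hZ
        have hZC : Z ≠ C := hbC ▸ hZ.2.1
        rw [cls_update_ne hZC, Finset.erase_eq_of_notMem]
        intro h
        exact hZ.1 ((mem_cls.1 h).symm.trans hv)
    · -- recursive case
      have htne : t ≠ [] := by
        rintro rfl
        simp at hlast
        exact hbC hlast
      have hlast' : (b :: t).getLast? = some C := by
        rw [List.getLast?_cons_cons] at hlast
        cases t with
        | nil => exact absurd rfl htne
        | cons c t' => exact hlast
      have hnd' : (b :: t).Nodup := (List.nodup_cons.1 hnd).2
      obtain ⟨g', hg'col, hg'sub, hg'cardb, hg'cardC, hg'other, hg'out⟩ :=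
        ih b hbt hnd' C hlast' hbC
      have hXout : X ∉ b :: t := (List.nodup_cons.1 hnd).1
      have hclsX : cls g' X = cls f X := hg'out X hXout
      have hvg' : v ∈ cls g' X := hclsX ▸ hvX
      have hvnotb : v ∉ cls g' b := fun h => hXbne (hv.symm.trans (mem_cls.1 (hg'sub h)))
      refine ⟨Function.update g' v b, ?_, ?_, ?_, ?_, ?_, ?_⟩
      · intro i
        by_cases hi : i = b
        · subst hi
          rw [cls_update_eq]
          exact degenOn_mono (Finset.insert_subset_insert v hg'sub) hmv.2
        · rw [cls_update_ne hi]
          exact degenOn_mono (Finset.erase_subset _ _) (hg'col i)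
      · rw [cls_update_ne hXbne, hclsX]
        exact Finset.erase_subset _ _
      · rw [cls_update_ne hXbne, hclsX]
        exact Finset.card_erase_add_one hvX
      · have hCb : C ≠ b := Ne.symm hbC
        rw [cls_update_ne hCb, Finset.erase_eq_of_notMem, hg'cardC]
        intro h
        exact hXC ((mem_cls.1 hvg').symm.trans (mem_cls.1 h))
      · intro Z hZX hZC
        by_cases hZb : Z = b
        · subst hZb
          rw [cls_update_eq, Finset.card_insert_of_notMem hvnotb]
          omega
        · rw [cls_update_ne hZb, Finset.erase_eq_of_notMem
            (fun h => hZX ((mem_cls.1 h).symm.trans (mem_cls.1 hvg')))]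
          exact hg'other Z hZb hZC
      · intro Z hZ
        have hZX : Z ≠ X := fun h => hZ (h ▸ List.mem_cons_self)
        have hZbt : Z ∉ b :: t := fun h => hZ (List.mem_cons_of_mem _ h)
        have hZb : Z ≠ b := fun h => hZbt (h ▸ List.mem_cons_self)
        rw [cls_update_ne hZb, Finset.erase_eq_of_notMem
          (fun h => hZX ((mem_cls.1 h).symm.trans (mem_cls.1 hvg'))), hg'out Z hZbt]

lemma minS_le {k : ℕ} (f : V → Fin k) (j : Fin k) : minS f ≤ (cls f j).card :=
  Nat.sInf_le ⟨j, rfl⟩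

lemma exists_minS {k : ℕ} (hk : 0 < k) (f : V → Fin k) :
    ∃ j : Fin k, (cls f j).card = minS f := by
  have : Nonempty (Fin k) := ⟨⟨0, hk⟩⟩
  obtain ⟨j₀⟩ := this
  have hmem : minS f ∈ {m | ∃ i, (cls f i).card = m} :=
    Nat.sInf_mem ⟨(cls f j₀).card, j₀, rfl⟩
  exact hmem

lemma isMinClass_iff {k : ℕ} (hk : 0 < k) (f : V → Fin k) (j : Fin k) :
    IsMinClass f j ↔ (cls f j).card = minS f := by
  constructor
  · intro h
    obtain ⟨j₀, hj₀⟩ := exists_minS hk f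
    exact le_antisymm (hj₀ ▸ h j₀) (minS_le f j)
  · intro h j'
    exact h ▸ minS_le f j'

lemma le_maxS {k : ℕ} (f : V → Fin k) (j : Fin k) : (cls f j).card ≤ maxS f := by
  unfold maxS
  exact Finset.le_sup (f := fun i => (cls f i).card) (Finset.mem_univ j)

lemma exists_maxS {k : ℕ} (hk : 0 < k) (f : V → Fin k) :
    ∃ j : Fin k, (cls f j).card = maxS f := by
  have : Nonempty (Fin k) := ⟨⟨0, hk⟩⟩
  obtain ⟨j, _, hj⟩ := Finset.exists_mem_eq_sup (univ : Finset (Fin k))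
    Finset.univ_nonempty (fun i => (cls f i).card)
  exact ⟨j, hj.symm⟩

lemma isMinClass_accessible (G : SimpleGraph V) (d : ℕ) {k : ℕ} {f : V → Fin k}
    {j : Fin k} (h : IsMinClass f j) : Accessible G d f j :=
  ⟨j, h, Relation.ReflTransGen.refl⟩

/-- Moving one vertex along an access path out of a non-minimum accessible class. -/
lemma exists_move (G : SimpleGraph V) (d : ℕ) {k : ℕ} (hk : 0 < k) (f : V → Fin k)
    (hf : IsDegenColoring G d f) (X : Fin k) (hacc : Accessible G d f X)
    (hX : (cls f X).card ≠ minS f) :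
    ∃ (g : V → Fin k) (C : Fin k), IsMinClass f C ∧ X ≠ C ∧ IsDegenColoring G d g ∧
      (cls g X).card + 1 = (cls f X).card ∧
      (cls g C).card = (cls f C).card + 1 ∧
      (∀ Z, Z ≠ X → Z ≠ C → (cls g Z).card = (cls f Z).card) := by
  obtain ⟨j, hjmin, hpath⟩ := hacc
  have hXj : X ≠ j := by
    intro h
    apply hX
    rw [h]
    exact (isMinClass_iff hk f j).1 hjmin
  obtain ⟨l, hchain, hlastl⟩ := List.exists_isChain_cons_of_relationReflTransGen hpath
  have hlast? : (X :: l).getLast? = some j := by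
    rw [List.getLast?_eq_getLast (List.cons_ne_nil _ _), hlastl]
  obtain ⟨l', hchain', hlast'?, hnd, _⟩ := chain_dedup l.length l X le_rfl hchain
  obtain ⟨g, hgcol, _, hcard1, hcard2, hother, _⟩ :=
    move_along G d f hf l' X hchain' hnd j (hlast'? ▸ hlast?) hXj
  exact ⟨g, j, hjmin, hXj, hgcol, hcard1, hcard2, hother⟩

lemma bverts_card (G : SimpleGraph V) (d : ℕ) {k : ℕ} (f : V → Fin k) :
    (Bverts G d f).card = ∑ j ∈ Bset G d f, (cls f j).card := by
  have h : Bverts G d f = (Bset G d f).biUnion (cls f) := by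
    ext v
    simp only [Bverts, Bset, Finset.mem_filter, Finset.mem_univ, true_and,
      Finset.mem_biUnion, mem_cls]
    constructor
    · intro h
      exact ⟨f v, by simpa using h, rfl⟩
    · rintro ⟨j, hj, rfl⟩
      simpa using hj
  rw [h]
  apply Finset.card_biUnion
  intro i _ j _ hij
  rw [Function.onFun, Finset.disjoint_left]
  intro v hvi hvj
  exact hij ((mem_cls.1 hvi).symm.trans (mem_cls.1 hvj))

/-- Unused minimum classes. -/
noncomputable def filtU {k : ℕ} (g : V → Fin k) (u : Finset (Fin k)) : Finset (Fin k) :=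
  Finset.univ.filter (fun j => IsMinClass g j ∧ j ∉ u)

noncomputable def DfOf (G : SimpleGraph V) (d : ℕ) {k : ℕ} (g : V → Fin k)
    (u : Finset (Fin k)) : Finset (Fin k) :=
  if h : (filtU g u).Nonempty then
    Finset.univ.filter (fun x => Accessible G d g x ∧ x ∉ u ∧
      AccTo G d g x ((filtU g u).min' h))
  else ∅

noncomputable def trmOf {k : ℕ} (hk : 0 < k) (g : V → Fin k) (u : Finset (Fin k)) :
    Fin k :=
  if h : (filtU g u).Nonempty then (filtU g u).min' h else ⟨0, hk⟩

noncomputable def usedRec (G : SimpleGraph V) (d : ℕ) {k : ℕ} (g : V → Fin k) :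
    ℕ → Finset (Fin k)
  | 0 => ∅
  | i + 1 => usedRec G d g i ∪ DfOf G d g (usedRec G d g i)

lemma usedRec_eq (G : SimpleGraph V) (d : ℕ) {k : ℕ} (g : V → Fin k) (n : ℕ) :
    usedRec G d g n = (Finset.range n).biUnion (fun m => DfOf G d g (usedRec G d g m)) := by
  induction n with
  | zero => simp [usedRec]
  | succ n ih =>
    rw [show usedRec G d g (n+1) = usedRec G d g n ∪ DfOf G d g (usedRec G d g n) from rfl,
      Finset.range_add_one, Finset.biUnion_insert, ih]
    exact Finset.union_comm _ _

lemma trmOf_mem_DfOf (G : SimpleGraph V) (d : ℕ) {k : ℕ} (hk : 0 < k) (g : V → Fin k)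
    (u : Finset (Fin k)) (h : (filtU g u).Nonempty) :
    trmOf hk g u ∈ DfOf G d g u ∧ trmOf hk g u ∉ u ∧ IsMinClass g (trmOf hk g u) := by
  have hmem := Finset.min'_mem (filtU g u) h
  simp only [filtU, Finset.mem_filter] at hmem
  have ht : trmOf hk g u = (filtU g u).min' h := dif_pos h
  refine ⟨?_, ht ▸ hmem.2.2, ht ▸ hmem.2.1⟩
  rw [DfOf, dif_pos h, Finset.mem_filter, ht]
  exact ⟨Finset.mem_univ _, isMinClass_accessible G d hmem.2.1, hmem.2.2,
    Relation.ReflTransGen.refl⟩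

lemma exists_decomp (G : SimpleGraph V) (d : ℕ) {k : ℕ} (hk : 0 < k) (g : V → Fin k) :
    ∃ (q : ℕ) (_ : 0 < q) (𝒟 : Fin q → Finset (Fin k)) (trm : Fin q → Fin k),
      IsDecomp G d g 𝒟 trm ∧ (∀ i, trm i ∈ 𝒟 i) := by
  classical
  set Active : ℕ → Prop := fun i => (filtU g (usedRec G d g i)).Nonempty with hAct
  -- termination
  have hmono : ∀ m n, m ≤ n → usedRec G d g m ⊆ usedRec G d g n := by
    intro m n hmn
    induction hmn with
    | refl => exact Finset.Subset.refl _
    | step _ ih => exact ih.trans Finset.subset_union_left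
  have hgrow : ∀ i, Active i → (usedRec G d g i).card < (usedRec G d g (i+1)).card := by
    intro i h
    apply Finset.card_lt_card
    constructor
    · exact Finset.subset_union_left
    · intro hsub
      obtain ⟨hmemD, hnotu, _⟩ := trmOf_mem_DfOf G d hk g (usedRec G d g i) h
      exact hnotu (hsub (Finset.mem_union_right _ hmemD))
  have hActmono : ∀ m n, m ≤ n → Active n → Active m := by
    intro m n hmn hn
    obtain ⟨x, hx⟩ := hn
    simp only [filtU, Finset.mem_filter] at hx
    refine ⟨x, ?_⟩
    simp only [filtU, Finset.mem_filter]
    exact ⟨hx.1, hx.2.1, fun hc => hx.2.2 (hmono m n hmn hc)⟩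
  have hterm : ∃ i, ¬ Active i := by
    by_contra hc
    push_neg at hc
    have hcard : ∀ i, i ≤ (usedRec G d g i).card := by
      intro i
      induction i with
      | zero => omega
      | succ i ih => have := hgrow i (hc i); omega
    have := hcard (k+1)
    have hle : (usedRec G d g (k+1)).card ≤ k := by
      have := Finset.card_le_univ (usedRec G d g (k+1))
      simpa using this
    omega
  set q := Nat.find hterm with hqdef
  have hq0 : 0 < q := by
    rcases Nat.eq_zero_or_pos q with h | h
    · exfalso
      have h0 : ¬ Active 0 := h ▸ Nat.find_spec hterm
      apply h0
      obtain ⟨j, hj⟩ := exists_minS hk g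
      refine ⟨j, ?_⟩
      simp only [filtU, Finset.mem_filter]
      exact ⟨Finset.mem_univ _, (isMinClass_iff hk g j).2 hj, by simp [usedRec]⟩
    · exact h
  have hactive : ∀ i : ℕ, i < q → Active i := by
    intro i hi
    by_contra hc
    have h2 : q ≤ i := Nat.find_le hc
    omega
  have hUB : ∀ i : Fin q,
      UsedBefore (fun i' : Fin q => DfOf G d g (usedRec G d g i'.val)) i
        = usedRec G d g i.val := by
    intro i
    ext x
    simp only [UsedBefore, Finset.mem_biUnion, Finset.mem_filter, Finset.mem_univ, true_and]
    rw [usedRec_eq, Finset.mem_biUnion]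
    constructor
    · rintro ⟨i', hlt, hx⟩
      exact ⟨i'.val, Finset.mem_range.2 hlt, hx⟩
    · rintro ⟨m, hm, hx⟩
      have hmq : m < q := lt_trans (Finset.mem_range.1 hm) i.isLt
      exact ⟨⟨m, hmq⟩, Finset.mem_range.1 hm, hx⟩
  have hmem_iff : ∀ (i : Fin q) (u : Fin k),
      u ∈ DfOf G d g (usedRec G d g i.val) ↔
        Accessible G d g u ∧ u ∉ usedRec G d g i.val ∧
          AccTo G d g u (trmOf hk g (usedRec G d g i.val)) := by
    intro i u
    have hA := hactive i.val i.isLt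
    have ht : trmOf hk g (usedRec G d g i.val) = (filtU g (usedRec G d g i.val)).min' hA :=
      dif_pos hA
    rw [ht, DfOf, dif_pos hA]
    simp only [Finset.mem_filter, Finset.mem_univ, true_and]
  have hpart2 : ∀ j, IsMinClass g j →
      ∃ i : Fin q, j ∈ DfOf G d g (usedRec G d g i.val) := by
    intro j hjmin
    have hnq : ¬ Active q := Nat.find_spec hterm
    have hju : j ∈ usedRec G d g q := by
      by_contra hju
      refine hnq ⟨j, ?_⟩
      simp only [filtU, Finset.mem_filter]
      exact ⟨Finset.mem_univ _, hjmin, hju⟩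
    rw [usedRec_eq] at hju
    obtain ⟨m, hm, hx⟩ := Finset.mem_biUnion.1 hju
    exact ⟨⟨m, Finset.mem_range.1 hm⟩, hx⟩
  refine ⟨q, hq0, fun i => DfOf G d g (usedRec G d g i.val),
    fun i => trmOf hk g (usedRec G d g i.val), ⟨?_, ?_, ?_⟩, ?_⟩
  · intro i
    have hA := hactive i.val i.isLt
    obtain ⟨hmemD, hnotu, hmin⟩ := trmOf_mem_DfOf G d hk g _ hA
    have ht : trmOf hk g (usedRec G d g i.val) = (filtU g (usedRec G d g i.val)).min' hA :=
      dif_pos hA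
    refine ⟨hmin, by rw [hUB]; exact hnotu, ?_, ?_⟩
    · intro j hjmin hjnot
      rw [hUB] at hjnot
      show trmOf hk g (usedRec G d g i.val) ≤ j
      rw [ht]
      apply Finset.min'_le
      simp only [filtU, Finset.mem_filter]
      exact ⟨Finset.mem_univ _, hjmin, hjnot⟩
    · intro u
      rw [hUB]
      exact hmem_iff i u
  · intro j hjmin
    exact hpart2 j hjmin
  · intro x hx
    by_contra hcon
    push_neg at hcon
    obtain ⟨j, hjmin, hpath⟩ := hx
    obtain ⟨i₀, hji₀⟩ := hpart2 j hjmin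
    have hjAcc := ((hmem_iff i₀ j).1 hji₀).2.2
    have hxnot : x ∉ usedRec G d g i₀.val := by
      intro hmem
      rw [usedRec_eq] at hmem
      obtain ⟨m, hm, hx2⟩ := Finset.mem_biUnion.1 hmem
      have hmq : m < q := lt_trans (Finset.mem_range.1 hm) i₀.isLt
      exact (hcon ⟨m, hmq⟩) hx2
    exact (hcon i₀) ((hmem_iff i₀ x).2 ⟨⟨j, hjmin, hpath⟩, hxnot,
      Relation.ReflTransGen.trans hpath hjAcc⟩)
  · intro i
    exact (trmOf_mem_DfOf G d hk g _ (hactive i.val i.isLt)).1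

lemma exists_uminus (G : SimpleGraph V) (d : ℕ) {k q : ℕ} {g : V → Fin k}
    {𝒟 : Fin q → Finset (Fin k)} {trm : Fin q → Fin k}
    (htrm : ∀ i, trm i ∈ 𝒟 i) (i : Fin q) :
    ∃ U, IsUminus G d g (𝒟 i) (trm i) U := by
  obtain ⟨U, hU, hmin⟩ := Finset.exists_min_image (𝒟 i)
    (fun U => (TSet G d g (𝒟 i) (trm i) U).card) ⟨trm i, htrm i⟩
  exact ⟨U, hU, hmin⟩

/-- Basic size facts from a near-equitable colouring. -/
lemma ne_facts {k : ℕ} (hk : 0 < k) (f : V → Fin k) (hne : NearEquitable (Fintype.card V) f) :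
    minS f ≤ Fintype.card V / k ∧
    Fintype.card V / k ≤ minS f + 1 ∧
    (Fintype.card V + k - 1) / k ≤ maxS f ∧
    maxS f ≤ (Fintype.card V + k - 1) / k + 1 ∧
    Fintype.card V / k ≤ (Fintype.card V + k - 1) / k ∧
    (Fintype.card V + k - 1) / k ≤ Fintype.card V / k + 1 ∧
    minS f + 2 ≤ maxS f ∧ maxS f ≤ minS f + 3 := by
  obtain ⟨hne1, hne2, hne3, ⟨ilo, hilo⟩, ⟨ihi, hihi⟩, ⟨ia, ja, hija⟩, hne7⟩ := hne
  obtain ⟨C0, hC0⟩ := exists_minS hk f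
  obtain ⟨X0, hX0⟩ := exists_maxS hk f
  have h1 : minS f ≤ Fintype.card V / k := le_trans (minS_le f ilo) hilo
  have h2 : Fintype.card V / k ≤ minS f + 1 := by
    have := (hne1 C0).1; omega
  have h3 : (Fintype.card V + k - 1) / k ≤ maxS f := le_trans hihi (le_maxS f ihi)
  have h4 : maxS f ≤ (Fintype.card V + k - 1) / k + 1 := by
    have := (hne1 X0).2; omega
  have h5 : Fintype.card V / k ≤ (Fintype.card V + k - 1) / k :=
    Nat.div_le_div_right (by omega)
  have h6 : (Fintype.card V + k - 1) / k ≤ Fintype.card V / k + 1 := by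
    have := Nat.div_le_div_right (c := k) (show Fintype.card V + k - 1 ≤ Fintype.card V + k by omega)
    rwa [Nat.add_div_right _ hk] at this
  have h7 : minS f + 2 ≤ maxS f := by
    have ha := minS_le f ia
    have hb := le_maxS f ja
    omega
  have h8 : maxS f ≤ minS f + 3 := by
    have := hne7 C0 X0
    omega
  exact ⟨h1, h2, h3, h4, h5, h6, h7, h8⟩

/-- If a maximum-size class is accessible, then an equitable colouring exists. -/
lemma max_acc_equitable {k : ℕ} (hk : 0 < k) (f : V → Fin k) (G : SimpleGraph V) (d : ℕ) (hf : IsDegenColoring G d f)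
    (hne : NearEquitable (Fintype.card V) f) (X : Fin k)
    (hX : (cls f X).card = maxS f) (hacc : Accessible G d f X) :
    ∃ g : V → Fin k, IsDegenColoring G d g ∧ IsEquitable g := by
  obtain ⟨h1, h2, h3, h4, h5, h6, h7, h8⟩ := ne_facts hk f hne
  set n := Fintype.card V
  set m := n / k with hm
  set M := (n + k - 1) / k with hM
  set s := minS f with hs
  set S := maxS f with hS
  obtain ⟨g, C, hCmin, hXC, hgcol, hc1, hc2, hother⟩ :=
    exists_move G d hk f hf X hacc (by omega)
  have hCcard : (cls f C).card = s := (isMinClass_iff hk f C).1 hCmin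
  have hall : ∀ Z, m ≤ (cls g Z).card ∧ (cls g Z).card ≤ M := by
    intro Z
    by_cases hZX : Z = X
    · subst hZX
      rw [hX] at hc1
      omega
    · by_cases hZC : Z = C
      · subst hZC
        rw [hCcard] at hc2
        omega
      · rw [hother Z hZX hZC]
        constructor
        · by_cases hsm : s < m
          · by_contra hcon
            push_neg at hcon
            have hZmem : Z ∈ Finset.univ.filter (fun i => (cls f i).card < n / k) := by
              simp only [Finset.mem_filter, Finset.mem_univ, true_and]; omega
            have hCmem : C ∈ Finset.univ.filter (fun i => (cls f i).card < n / k) := by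
              simp only [Finset.mem_filter, Finset.mem_univ, true_and]; omega
            have hsub : ({Z, C} : Finset (Fin k)) ⊆
                Finset.univ.filter (fun i => (cls f i).card < n / k) := by
              intro x hx
              rcases Finset.mem_insert.1 hx with h | h
              · exact h ▸ hZmem
              · exact (Finset.mem_singleton.1 h) ▸ hCmem
            have h2card : 2 ≤ (Finset.univ.filter (fun i => (cls f i).card < n / k)).card := by
              have := Finset.card_le_card hsub
              rwa [Finset.card_insert_of_notMem (by simpa using hZC),
                Finset.card_singleton] at this
            have := hne.2.1
            omega
          · have := minS_le f Z
            omega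
        · by_cases hMS : M < S
          · by_contra hcon
            push_neg at hcon
            have hZmem : Z ∈ Finset.univ.filter (fun i => (n + k - 1) / k < (cls f i).card) := by
              simp only [Finset.mem_filter, Finset.mem_univ, true_and]; omega
            have hXmem : X ∈ Finset.univ.filter (fun i => (n + k - 1) / k < (cls f i).card) := by
              simp only [Finset.mem_filter, Finset.mem_univ, true_and]; omega
            have hsub : ({Z, X} : Finset (Fin k)) ⊆
                Finset.univ.filter (fun i => (n + k - 1) / k < (cls f i).card) := by
              intro x hx
              rcases Finset.mem_insert.1 hx with h | h
              · exact h ▸ hZmem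
              · exact (Finset.mem_singleton.1 h) ▸ hXmem
            have h2card : 2 ≤ (Finset.univ.filter (fun i => (n + k - 1) / k < (cls f i).card)).card := by
              have := Finset.card_le_card hsub
              rwa [Finset.card_insert_of_notMem (by simpa using hZX),
                Finset.card_singleton] at this
            have := hne.2.2.1
            omega
          · have := le_maxS f Z
            omega
  refine ⟨g, hgcol, ?_⟩
  intro i j
  have hi := (hall i).2
  have hj := (hall j).1
  omega

/-- If the spread is 3 and some accessible class has `minS + 2` vertices, we can improve. -/
lemma spread3_improve {k : ℕ} (hk : 0 < k) (f : V → Fin k) (G : SimpleGraph V) (d : ℕ) (hf : IsDegenColoring G d f)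
    (hne : NearEquitable (Fintype.card V) f) (X : Fin k)
    (hspread : maxS f = minS f + 3) (hX : (cls f X).card = minS f + 2)
    (hacc : Accessible G d f X) :
    ∃ g : V → Fin k, IsDegenColoring G d g ∧ NearEquitable (Fintype.card V) g ∧
      maxS g - minS g = 2 := by
  obtain ⟨h1, h2, h3, h4, h5, h6, h7, h8⟩ := ne_facts hk f hne
  set n := Fintype.card V
  set m := n / k with hm
  set M := (n + k - 1) / k with hM
  set s := minS f with hs
  set S := maxS f with hS
  -- spread 3 forces the precise shape
  have hm1 : m = s + 1 := by omega
  have hM1 : M = m + 1 := by omega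
  have hmpos : 1 ≤ m := by omega
  obtain ⟨g, C, hCmin, hXC, hgcol, hc1, hc2, hother⟩ :=
    exists_move G d hk f hf X hacc (by omega)
  have hCcard : (cls f C).card = s := (isMinClass_iff hk f C).1 hCmin
  obtain ⟨X0, hX0⟩ := exists_maxS hk f
  have hX0X : X0 ≠ X := by intro h; rw [h, hX] at hX0; omega
  have hX0C : X0 ≠ C := by intro h; rw [h, hCcard] at hX0; omega
  have hgX : (cls g X).card = m := by rw [hX] at hc1; omega
  have hgC : (cls g C).card = m := by rw [hCcard] at hc2; omega
  have hgX0 : (cls g X0).card = m + 2 := by rw [hother X0 hX0X hX0C, hX0]; omega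
  -- all old classes other than C have at least m vertices
  have hfother : ∀ Z, Z ≠ C → m ≤ (cls f Z).card := by
    intro Z hZC
    by_contra hcon
    push_neg at hcon
    have hZmem : Z ∈ Finset.univ.filter (fun i => (cls f i).card < n / k) := by
      simp only [Finset.mem_filter, Finset.mem_univ, true_and]; omega
    have hCmem : C ∈ Finset.univ.filter (fun i => (cls f i).card < n / k) := by
      simp only [Finset.mem_filter, Finset.mem_univ, true_and]; omega
    have hsub : ({Z, C} : Finset (Fin k)) ⊆
        Finset.univ.filter (fun i => (cls f i).card < n / k) := by
      intro x hx
      rcases Finset.mem_insert.1 hx with h | h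
      · exact h ▸ hZmem
      · exact (Finset.mem_singleton.1 h) ▸ hCmem
    have h2card : 2 ≤ (Finset.univ.filter (fun i => (cls f i).card < n / k)).card := by
      have := Finset.card_le_card hsub
      rwa [Finset.card_insert_of_notMem (by simpa using hZC),
        Finset.card_singleton] at this
    have := hne.2.1
    omega
  have hglow : ∀ Z, m ≤ (cls g Z).card := by
    intro Z
    by_cases hZX : Z = X
    · rw [hZX, hgX]
    · by_cases hZC : Z = C
      · rw [hZC, hgC]
      · rw [hother Z hZX hZC]
        exact hfother Z hZC
  have hghigh : ∀ Z, (cls g Z).card ≤ m + 2 := by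
    intro Z
    by_cases hZX : Z = X
    · rw [hZX, hgX]; omega
    · by_cases hZC : Z = C
      · rw [hZC, hgC]; omega
      · rw [hother Z hZX hZC]
        have := le_maxS f Z
        omega
  have hmaxg : maxS g = m + 2 := by
    apply le_antisymm
    · exact Finset.sup_le (fun i _ => hghigh i)
    · rw [← hgX0]; exact le_maxS g X0
  have hming : minS g = m := by
    apply le_antisymm
    · rw [← hgX]; exact minS_le g X
    · obtain ⟨j1, hj1⟩ := exists_minS hk g
      rw [← hj1]; exact hglow j1
  refine ⟨g, hgcol, ⟨?_, ?_, ?_, ?_, ?_, ?_, ?_⟩, by omega⟩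
  · intro i
    have := hglow i
    have := hghigh i
    constructor <;> omega
  · have hempty : (Finset.univ.filter (fun i => (cls g i).card < n / k)) = ∅ := by
      apply Finset.filter_eq_empty_iff.2
      intro i _
      have := hglow i
      omega
    rw [hempty]
    simp
  · have hsub : (Finset.univ.filter (fun i => (n + k - 1) / k < (cls g i).card)) ⊆
        (Finset.univ.filter (fun i => (n + k - 1) / k < (cls f i).card)) := by
      intro Z hZ
      simp only [Finset.mem_filter, Finset.mem_univ, true_and] at hZ ⊢
      have hZX : Z ≠ X := by intro h; rw [h, hgX] at hZ; omega
      have hZC : Z ≠ C := by intro h; rw [h, hgC] at hZ; omega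
      rwa [hother Z hZX hZC] at hZ
    exact le_trans (Finset.card_le_card hsub) hne.2.2.1
  · exact ⟨X, by rw [hgX]⟩
  · exact ⟨X0, by rw [hgX0]; omega⟩
  · exact ⟨X, X0, by rw [hgX, hgX0]⟩
  · intro i j
    have := hghigh j
    have := hglow i
    omega

/-- **Lemma 2.4(b).**  For every accessible colour class `V` of the minimal
near-equitable `d`-degenerate `k`-colouring `f`, the set `B` of vertices lying in
non-accessible classes satisfies `|B| ≥ b·|V| + 1`, where `b` is the number of
non-accessible classes. -/
theorem B_card_lower_bound
    (Δ d k : ℕ) (hΔ : 0 < Δ) (hd : 0 < d) (hk : 0 < k)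
    (hΔk : Δ + 1 ≤ (d + 1) * k)
    (G : SimpleGraph V)
    (hdeg : ∀ v : V, (Finset.univ.filter (fun u => G.Adj v u)).card ≤ Δ)
    (hnoeq : ¬ ∃ g : V → Fin k, IsDegenColoring G d g ∧ IsEquitable g)
    (f : V → Fin k) (hf : IsDegenColoring G d f)
    (hne : NearEquitable (Fintype.card V) f)
    (q : ℕ) (hq : 0 < q) (𝒟 : Fin q → Finset (Fin k)) (trm : Fin q → Fin k)
    (hdec : IsDecomp G d f 𝒟 trm)
    (Dl : Finset (Fin k)) (hDl : Dl = 𝒟 ⟨q - 1, by omega⟩)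
    (Cm : Fin k) (hCm : Cm = trm ⟨q - 1, by omega⟩)
    (Um : Fin k) (hUm : IsUminus G d f Dl Cm Um)
    (Tf : Finset (Fin k)) (hTf : Tf = TSet G d f Dl Cm Um)
    (hmin : MinimalNE G d f Tf) :
    ∀ i : Fin k, Accessible G d f i →
      (Bset G d f).card * (cls f i).card + 1 ≤ (Bverts G d f).card := by
  intro i hacc
  obtain ⟨h1, h2, h3, h4, h5, h6, h7, h8⟩ := ne_facts hk f hne
  set s := minS f with hs
  set S := maxS f with hS
  -- a maximum class
  obtain ⟨X0, hX0⟩ := exists_maxS hk f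
  -- the maximum class is not accessible
  have hX0nacc : ¬ Accessible G d f X0 := by
    intro h
    exact hnoeq (max_acc_equitable hk f G d hf hne X0 hX0 h)
  have hX0B : X0 ∈ Bset G d f := by
    simp only [Bset, Finset.mem_filter, Finset.mem_univ, true_and]
    exact hX0nacc
  -- every non-accessible class has more than minS vertices
  have hBbig : ∀ W ∈ Bset G d f, s + 1 ≤ (cls f W).card := by
    intro W hW
    simp only [Bset, Finset.mem_filter, Finset.mem_univ, true_and] at hW
    have hge := minS_le f W
    rcases Nat.lt_or_ge s (cls f W).card with h | h
    · omega
    · exfalso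
      have : (cls f W).card = s := by omega
      exact hW (isMinClass_accessible G d ((isMinClass_iff hk f W).2 this))
  -- accessible classes have at most minS + 1 vertices
  have hacc_small : (cls f i).card ≤ s + 1 := by
    by_contra hcon
    push_neg at hcon
    have hle := le_maxS f i
    rcases Nat.eq_or_lt_of_le hle with heq | hlt
    · exact hnoeq (max_acc_equitable hk f G d hf hne i heq hacc)
    · -- then S = s + 3 and |cls f i| = s + 2
      have hspread : S = s + 3 := by omega
      have hcard : (cls f i).card = s + 2 := by omega
      obtain ⟨g, hgcol, hgne, hg2⟩ :=
        spread3_improve hk f G d hf hne i hspread hcard hacc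
      obtain ⟨q', hq', 𝒟', trm', hdec', htrm'⟩ := exists_decomp G d hk g
      obtain ⟨U', hU'⟩ := exists_uminus G d htrm' ⟨q' - 1, by omega⟩
      have hlex := hmin g hgcol hgne q' hq' 𝒟' trm' hdec' U' hU'
      rw [Lex3Le] at hlex
      simp only [tripleOf] at hlex
      have hspreadf : maxS f - minS f = 3 := by omega
      rcases hlex with h | ⟨h, _⟩ <;> omega
  -- counting
  rw [bverts_card]
  have hX0card : s + 2 ≤ (cls f X0).card := by omega
  have hsum : ∑ j ∈ (Bset G d f).erase X0, (cls f j).card + (cls f X0).card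
      = ∑ j ∈ Bset G d f, (cls f j).card := Finset.sum_erase_add _ _ hX0B
  have hlow : ((Bset G d f).erase X0).card • (s + 1)
      ≤ ∑ j ∈ (Bset G d f).erase X0, (cls f j).card := by
    apply Finset.card_nsmul_le_sum
    intro x hx
    exact hBbig x (Finset.erase_subset _ _ hx)
  have hcb : ((Bset G d f).erase X0).card = (Bset G d f).card - 1 :=
    Finset.card_erase_of_mem hX0B
  have hb1 : 1 ≤ (Bset G d f).card := Finset.card_pos.2 ⟨X0, hX0B⟩
  obtain ⟨b', hb'⟩ : ∃ b', (Bset G d f).card = b' + 1 := ⟨(Bset G d f).card - 1, by omega⟩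
  rw [smul_eq_mul] at hlow
  calc (Bset G d f).card * (cls f i).card + 1
      ≤ (Bset G d f).card * (s + 1) + 1 :=
        Nat.add_le_add_right (Nat.mul_le_mul_left _ hacc_small) 1
    _ = b' * (s + 1) + (s + 2) := by rw [hb']; ring
    _ ≤ ∑ j ∈ (Bset G d f).erase X0, (cls f j).card + (cls f X0).card := by
        apply Nat.add_le_add _ hX0card
        have : ((Bset G d f).erase X0).card = b' := by omega
        rw [← this]
        exact hlow
    _ = ∑ j ∈ Bset G d f, (cls f j).card := hsum
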